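/- For positive integers w1, w2, any y ∈ R and n ≥ 0: w2 · w1^{n−1}·w1 · Σ_{i=0}^{w1−1} q^{w2·i} · B_{n,q^{w1}}(w2·y + (w2/w1)·i) = w1 · w2^{n−1}·w2 · Σ_{i=0}^{w2−1} q^{w1·i} · B_{n,q^{w2}}(w1·y + (w1/w2)·i); equivalently w2·w1^n·Σ_{i<w1} q^{w2 i} B_{n,q^{w1}}(w2 y + w2 i/w1) = w1·w2^n·Σ_{i<w2} q^{w1 i} B_{n,q^{w2}}(w1 y + w1 i/w2). -/

import Mathlib

open Finset

/-- The q-analogue of power sums: `S_{k,q}(m) = Σ_{i=0}^m i^k q^i` (with `0^0 = 1`). -/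
def qS {R : Type*} [CommRing R] (q : R) (k m : ℕ) : R :=
  ∑ i ∈ Finset.range (m + 1), (i : R) ^ k * q ^ i

/-- q-Bernoulli numbers `b_n(q, L)`: `(q-1) b_0 = L` and for `n ≥ 1`,
`(q-1) b_n = [n = 1] - q Σ_{k<n} C(n,k) b_k`. -/
noncomputable def qb {R : Type*} [CommRing R] (q L : R) : ℕ → R
  | 0 => Ring.inverse (q - 1) * L
  | n + 1 =>
      Ring.inverse (q - 1) *
        ((if n + 1 = 1 then (1 : R) else 0) -
          q * ∑ k ∈ (Finset.range (n + 1)).attach,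
              ((n + 1).choose k.1 : R) * qb q L k.1)
  termination_by n => n
  decreasing_by exact Finset.mem_range.mp k.2

/-- q-Bernoulli polynomials `B_{n,q}(x) = Σ_{k=0}^n C(n,k) b_k(q,L) x^{n-k}`. -/
noncomputable def qB {R : Type*} [CommRing R] (q L : R) (n : ℕ) (x : R) : R :=
  ∑ k ∈ Finset.range (n + 1), (n.choose k : R) * qb q L k * x ^ (n - k)

lemma choose_reflect (n t m : ℕ) (ht : t ≤ n) :
    n.choose (n - t) * (n - t).choose m = n.choose m * (n - m).choose t := by
  rcases le_or_gt m (n - t) with h | h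
  · rw [Nat.choose_mul h]
    congr 1
    rw [show n - t - m = (n - m) - t by omega, Nat.choose_symm (by omega)]
  · rw [Nat.choose_eq_zero_of_lt h, mul_zero]
    rcases le_or_gt m n with hm | hm
    · rw [Nat.choose_eq_zero_of_lt (show n - m < t by omega), mul_zero]
    · rw [Nat.choose_eq_zero_of_lt hm, zero_mul]

lemma appell {R : Type*} [CommRing R] (a : ℕ → R) (n : ℕ) (x y : R) :
    ∑ k ∈ range (n+1), (n.choose k : R) *
        (∑ m ∈ range (k+1), (k.choose m : R) * a m * y ^ (k-m)) * x ^ (n-k)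
      = ∑ m ∈ range (n+1), (n.choose m : R) * a m * (x+y) ^ (n-m) := by
  have h1 : ∀ k ∈ range (n+1), (n.choose k : R) *
        (∑ m ∈ range (k+1), (k.choose m : R) * a m * y ^ (k-m)) * x ^ (n-k)
      = ∑ m ∈ range (n+1), (n.choose k : R) * ((k.choose m : R) * a m * y ^ (k-m)) * x ^ (n-k) := by
    intro k hk
    rw [mul_sum, sum_mul]
    apply Finset.sum_subset
    · exact Finset.range_subset_range.2 (by simp at hk; omega)
    · intro m _ hm
      simp only [mem_range, not_lt] at hm
      rw [Nat.choose_eq_zero_of_lt (show k < m by omega)]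
      push_cast; ring
  rw [Finset.sum_congr rfl h1, Finset.sum_comm]
  apply Finset.sum_congr rfl
  intro m hm
  simp only [mem_range] at hm
  rw [add_pow, mul_sum]
  have h2 : ∑ t ∈ range (n - m + 1), (n.choose m : R) * a m * (x ^ t * y ^ (n-m-t) * ((n-m).choose t : R))
      = ∑ t ∈ range (n + 1), (n.choose m : R) * a m * (x ^ t * y ^ (n-m-t) * ((n-m).choose t : R)) := by
    apply Finset.sum_subset
    · exact Finset.range_subset_range.2 (by omega)
    · intro t _ ht
      simp only [mem_range, not_lt] at ht
      rw [Nat.choose_eq_zero_of_lt (show n - m < t by omega)]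
      push_cast; ring
  rw [h2, ← Finset.sum_range_reflect]
  apply Finset.sum_congr rfl
  intro k hk
  simp only [mem_range] at hk
  have hk' : k ≤ n := by omega
  have e2 : (n.choose (n-k) : R) * ((n-k).choose m : R) = (n.choose m : R) * ((n-m).choose k : R) := by
    rw [← Nat.cast_mul, ← Nat.cast_mul, choose_reflect n k m hk']
  rw [show n + 1 - 1 - k = n - k by omega, show n - (n-k) = k by omega,
    show n-k-m = n-m-k by omega]
  linear_combination (a m * y ^ (n-m-k) * x ^ k) * e2

lemma qb_mul {R : Type*} [CommRing R] (q L : R) (hu : IsUnit (q - 1)) (n : ℕ) :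
    (q - 1) * qb q L (n + 1)
      = (if n + 1 = 1 then (1 : R) else 0) -
          q * ∑ k ∈ Finset.range (n + 1), ((n + 1).choose k : R) * qb q L k := by
  rw [show qb q L (n+1) = Ring.inverse (q - 1) *
        ((if n + 1 = 1 then (1 : R) else 0) -
          q * ∑ k ∈ (Finset.range (n + 1)).attach,
              ((n + 1).choose k.1 : R) * qb q L k.1) from by rw [qb]]
  rw [← mul_assoc, Ring.mul_inverse_cancel _ hu, one_mul,
    Finset.sum_attach (Finset.range (n+1)) (fun k => ((n + 1).choose k : R) * qb q L k)]

lemma qb_zero_mul {R : Type*} [CommRing R] (q L : R) (hu : IsUnit (q - 1)) :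
    (q - 1) * qb q L 0 = L := by
  rw [show qb q L 0 = Ring.inverse (q - 1) * L from by rw [qb], ← mul_assoc,
    Ring.mul_inverse_cancel _ hu, one_mul]

lemma qb_recur {R : Type*} [CommRing R] (q L : R) (hu : IsUnit (q - 1)) (k : ℕ) :
    q * ∑ j ∈ Finset.range (k+1), ((k.choose j : R) * qb q L j)
      = qb q L k + (if k = 1 then (1:R) else 0) + (if k = 0 then L else 0) := by
  cases k with
  | zero =>
      rw [show (0:ℕ)+1 = 1 from rfl, Finset.range_one, Finset.sum_singleton]
      norm_num
      linear_combination qb_zero_mul q L hu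
  | succ n =>
      have h := qb_mul q L hu n
      rw [Finset.sum_range_succ, Nat.choose_self, Nat.cast_one, one_mul, mul_add]
      simp only [Nat.succ_ne_zero, if_false, add_zero]
      linear_combination h

/-- `DD q L w k x = Σ_m C(k,m) b_m(q^w, wL) w^m x^{k-m}`. -/
noncomputable def DD {R : Type*} [CommRing R] (q L : R) (w k : ℕ) (x : R) : R :=
  ∑ m ∈ range (k+1), (k.choose m : R) * (qb (q^w) ((w:R)*L) m * (w:R)^m) * x ^ (k-m)

lemma DD_shift {R : Type*} [CommRing R] (q L : R) (w k : ℕ) (y : R) :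
    ∑ j ∈ range (k+1), (k.choose j : R) * DD q L w j y = DD q L w k (y + 1) := by
  have h := appell (fun m => qb (q^w) ((w:R)*L) m * (w:R)^m) k 1 y
  simp only [one_pow, mul_one] at h
  simp only [DD]
  simpa only [show (1:R) + y = y + 1 from add_comm 1 y] using h

lemma DD_zero {R : Type*} [CommRing R] (q L : R) (w k : ℕ) :
    DD q L w k 0 = qb (q^w) ((w:R)*L) k * (w:R)^k := by
  rw [DD, Finset.sum_range_succ, Nat.choose_self, Nat.cast_one, one_mul, Nat.sub_self, pow_zero,
    mul_one, Finset.sum_eq_zero, zero_add]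
  intro m hm
  rw [zero_pow (by simp only [mem_range] at hm; omega), mul_zero]

lemma DD_w {R : Type*} [CommRing R] (q L : R) (w k : ℕ) :
    DD q L w k ((w:ℕ):R) = (w:R)^k * ∑ m ∈ range (k+1), ((k.choose m : R) * qb (q^w) ((w:R)*L) m) := by
  rw [DD, Finset.mul_sum]
  refine Finset.sum_congr rfl fun m hm => ?_
  have : (w:R)^m * (w:R)^(k-m) = (w:R)^k := by
    rw [← pow_add]; congr 1; simp only [mem_range] at hm; omega
  linear_combination ((k.choose m : R) * qb (q^w) ((w:R)*L) m) * this

lemma key {R : Type*} [CommRing R] (q L : R) (w : ℕ) (hw : 0 < w)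
    (hq1 : IsUnit (q - 1)) (hqw : IsUnit (q^w - 1)) (k : ℕ) :
    ∑ i ∈ range w, q^i * DD q L w k (i:R) = (w:R) * qb q L k := by
  induction k using Nat.strong_induction_on with
  | _ k ih =>
  -- boundary identity
  have hrec := qb_recur (q^w) ((w:R)*L) hqw k
  have hbd : q^w * DD q L w k ((w:ℕ):R) - DD q L w k 0
      = (w:R) * (if k = 1 then (1:R) else 0) + (w:R) * L * (if k = 0 then (1:R) else 0) := by
    rw [DD_w, DD_zero]
    by_cases hk0 : k = 0
    · subst hk0
      simp only [if_pos rfl, if_neg (by norm_num : ¬ (0:ℕ) = 1), pow_zero, if_true] at hrec ⊢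
      linear_combination hrec
    · by_cases hk1 : k = 1
      · subst hk1
        simp only [if_pos rfl, if_neg (by norm_num : ¬ (1:ℕ) = 0), pow_one, if_true] at hrec ⊢
        linear_combination (w:R) * hrec
      · simp only [if_neg hk0, if_neg hk1] at hrec ⊢
        linear_combination (w:R)^k * hrec
  -- telescoping
  have htel : ∑ i ∈ range w, q^(i+1) * DD q L w k ((i:R)+1)
      = (∑ i ∈ range w, q^i * DD q L w k (i:R)) - DD q L w k 0 + q^w * DD q L w k ((w:ℕ):R) := by
    have h := Finset.sum_range_succ' (fun i => q^i * DD q L w k (i:R)) w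
    have h2 := Finset.sum_range_succ (fun i => q^i * DD q L w k (i:R)) w
    push_cast at h
    linear_combination h2 - h
  -- star
  have star : q * ∑ j ∈ range (k+1), (k.choose j : R) * (∑ i ∈ range w, q^i * DD q L w j (i:R))
      = (∑ i ∈ range w, q^i * DD q L w k (i:R))
        + (w:R) * (if k = 1 then (1:R) else 0) + (w:R) * L * (if k = 0 then (1:R) else 0) := by
    have swap : q * ∑ j ∈ range (k+1), (k.choose j : R) * (∑ i ∈ range w, q^i * DD q L w j (i:R))
        = ∑ i ∈ range w, q^(i+1) * ∑ j ∈ range (k+1), (k.choose j : R) * DD q L w j (i:R) := by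
      rw [Finset.mul_sum]
      simp_rw [Finset.mul_sum]
      rw [Finset.sum_comm]
      exact Finset.sum_congr rfl fun i _ => Finset.sum_congr rfl fun j _ => by ring
    rw [swap]
    have : ∀ i ∈ range w, q^(i+1) * ∑ j ∈ range (k+1), (k.choose j : R) * DD q L w j (i:R)
        = q^(i+1) * DD q L w k ((i:R)+1) := fun i _ => by rw [DD_shift]
    rw [Finset.sum_congr rfl this, htel]
    linear_combination hbd
  -- conclude
  have hx := qb_recur q L hq1 k
  rw [Finset.sum_range_succ, Nat.choose_self, Nat.cast_one, one_mul] at star hx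
  have h1 : ∑ j ∈ range k, (k.choose j : R) * (∑ i ∈ range w, q^i * DD q L w j (i:R))
      = ∑ j ∈ range k, (k.choose j : R) * ((w:R) * qb q L j) :=
    Finset.sum_congr rfl fun j hj => by rw [ih j (mem_range.mp hj)]
  have h3 : ∑ j ∈ range k, (k.choose j : R) * ((w:R) * qb q L j)
      = (w:R) * ∑ j ∈ range k, (k.choose j : R) * qb q L j := by
    rw [Finset.mul_sum]
    exact Finset.sum_congr rfl fun _ _ => by ring
  have e0 : (if k = 0 then L else 0) = L * (if k = 0 then (1:R) else 0) := by
    split <;> ring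
  refine hq1.mul_left_cancel ?_
  linear_combination star - (w:R) * hx - q * h1 - q * h3 - (w:R) * e0

lemma mult {R : Type*} [CommRing R] (q L : R) (w : ℕ) (hw : 0 < w)
    (hq1 : IsUnit (q - 1)) (hqw : IsUnit (q^w - 1)) (n : ℕ) (z : R) (c : ℕ → R)
    (hc : ∀ i : ℕ, (w:R) * c i = (i:R)) :
    (w:R) * qB q L n ((w:R)*z)
      = (w:R)^n * ∑ i ∈ range w, q^i * qB (q^w) ((w:R)*L) n (z + c i) := by
  have hpt : ∀ i : ℕ, DD q L w n ((w:R)*z + (i:R))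
      = (w:R)^n * qB (q^w) ((w:R)*L) n (z + c i) := by
    intro i
    rw [DD, qB, Finset.mul_sum]
    refine Finset.sum_congr rfl fun m hm => ?_
    have hm' : m < n+1 := mem_range.mp hm
    have hw2 : (w:R)^m * (w:R)^(n-m) = (w:R)^n := by rw [← pow_add]; congr 1; omega
    have harg : ((w:R)*z + (i:R))^(n-m) = ((w:R)^(n-m)) * (z + c i)^(n-m) := by
      rw [← mul_pow, mul_add, hc i]
    rw [harg]
    linear_combination ((n.choose m:R) * qb (q^w) ((w:R)*L) m * (z + c i)^(n-m)) * hw2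
  calc (w:R) * qB q L n ((w:R)*z)
      = ∑ k ∈ range (n+1), (n.choose k:R) * ((w:R) * qb q L k) * ((w:R)*z)^(n-k) := by
        rw [qB, Finset.mul_sum]; exact Finset.sum_congr rfl fun _ _ => by ring
    _ = ∑ k ∈ range (n+1), (n.choose k:R) * (∑ i ∈ range w, q^i * DD q L w k (i:R)) * ((w:R)*z)^(n-k) :=
        Finset.sum_congr rfl fun k _ => by rw [key q L w hw hq1 hqw k]
    _ = ∑ i ∈ range w, q^i * ∑ k ∈ range (n+1), (n.choose k:R) * DD q L w k (i:R) * ((w:R)*z)^(n-k) := by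
        simp_rw [Finset.mul_sum, Finset.sum_mul]
        rw [Finset.sum_comm]
        exact Finset.sum_congr rfl fun i _ => Finset.sum_congr rfl fun k _ => by ring
    _ = ∑ i ∈ range w, q^i * DD q L w n ((w:R)*z + (i:R)) := by
        refine Finset.sum_congr rfl fun i _ => ?_
        have h := appell (fun m => qb (q^w) ((w:R)*L) m * (w:R)^m) n ((w:R)*z) (i:R)
        simp only [DD]
        rw [← h]
    _ = ∑ i ∈ range w, q^i * ((w:R)^n * qB (q^w) ((w:R)*L) n (z + c i)) :=
        Finset.sum_congr rfl fun i _ => by rw [hpt]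
    _ = (w:R)^n * ∑ i ∈ range w, q^i * qB (q^w) ((w:R)*L) n (z + c i) := by
        rw [Finset.mul_sum]
        exact Finset.sum_congr rfl fun _ _ => by ring

theorem symm_two_var_double {R : Type*} [CommRing R] [Algebra ℚ R] (q L : R)
    (hq : ∀ w : ℕ, 0 < w → IsUnit (q ^ w - 1)) (w1 w2 : ℕ) (hw1 : 0 < w1) (hw2 : 0 < w2) (y : R) (n : ℕ) :
    (w2 : R) * (w1 : R) ^ n * ∑ i ∈ Finset.range w1, q ^ (w2 * i) *
        qB (q ^ w1) ((w1 : R) * L) n ((w2 : R) * y + algebraMap ℚ R ((w2 : ℚ) * (i : ℚ) / (w1 : ℚ)))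
      = (w1 : R) * (w2 : R) ^ n * ∑ i ∈ Finset.range w2, q ^ (w1 * i) *
          qB (q ^ w2) ((w2 : R) * L) n ((w1 : R) * y + algebraMap ℚ R ((w1 : ℚ) * (i : ℚ) / (w2 : ℚ))) := by
  have side : ∀ a b : ℕ, 0 < a → 0 < b →
      (b : R) * (a : R) ^ n * ∑ i ∈ Finset.range a, q ^ (b * i) *
          qB (q ^ a) ((a : R) * L) n ((b : R) * y + algebraMap ℚ R ((b : ℚ) * (i : ℚ) / (a : ℚ)))
        = ((a:R)^n * (b:R)^n) * ∑ i ∈ Finset.range a, ∑ j ∈ Finset.range b,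
            q ^ (b*i + a*j) * qB (q ^ (a*b)) (((a*b : ℕ) : R) * L) n
              (y + algebraMap ℚ R ((i:ℚ)/(a:ℚ) + (j:ℚ)/(b:ℚ))) := by
    intro a b ha hb
    have hua : IsUnit (q^a - 1) := hq a ha
    have huab : IsUnit ((q^a)^b - 1) := by rw [← pow_mul]; exact hq _ (Nat.mul_pos ha hb)
    have hc : ∀ j : ℕ, (b:R) * (algebraMap ℚ R ((j:ℚ)/(b:ℚ))) = (j:R) := by
      intro j
      rw [← map_natCast (algebraMap ℚ R) b, ← map_mul,
        show (b:ℚ) * ((j:ℚ)/(b:ℚ)) = (j:ℚ) from by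
          field_simp, map_natCast]
    have harg : ∀ i : ℕ, (b:R)*y + algebraMap ℚ R ((b:ℚ)*(i:ℚ)/(a:ℚ))
        = (b:R) * (y + algebraMap ℚ R ((i:ℚ)/(a:ℚ))) := by
      intro i
      rw [mul_add]
      congr 1
      rw [show ((b:ℚ)*(i:ℚ)/(a:ℚ)) = (b:ℚ) * ((i:ℚ)/(a:ℚ)) by ring, map_mul, map_natCast]
    calc (b : R) * (a : R) ^ n * ∑ i ∈ Finset.range a, q ^ (b * i) *
          qB (q ^ a) ((a : R) * L) n ((b : R) * y + algebraMap ℚ R ((b : ℚ) * (i : ℚ) / (a : ℚ)))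
        = (a:R)^n * ∑ i ∈ Finset.range a, q ^ (b * i) *
            ((b:R) * qB (q ^ a) ((a : R) * L) n ((b:R) * (y + algebraMap ℚ R ((i:ℚ)/(a:ℚ))))) := by
          rw [Finset.mul_sum, Finset.mul_sum]
          exact Finset.sum_congr rfl fun i _ => by rw [harg i]; ring
      _ = (a:R)^n * ∑ i ∈ Finset.range a, q ^ (b * i) *
            ((b:R)^n * ∑ j ∈ Finset.range b, (q^a)^j *
              qB ((q^a)^b) ((b:R)*((a:R)*L)) n ((y + algebraMap ℚ R ((i:ℚ)/(a:ℚ))) + algebraMap ℚ R ((j:ℚ)/(b:ℚ)))) := by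
          congr 1
          exact Finset.sum_congr rfl fun i _ => by
            rw [mult (q^a) ((a:R)*L) b hb hua huab n (y + algebraMap ℚ R ((i:ℚ)/(a:ℚ)))
              (fun j => algebraMap ℚ R ((j:ℚ)/(b:ℚ))) hc]
      _ = ((a:R)^n * (b:R)^n) * ∑ i ∈ Finset.range a, ∑ j ∈ Finset.range b,
            q ^ (b*i + a*j) * qB (q ^ (a*b)) (((a*b : ℕ) : R) * L) n
              (y + algebraMap ℚ R ((i:ℚ)/(a:ℚ) + (j:ℚ)/(b:ℚ))) := by
          simp_rw [Finset.mul_sum]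
          refine Finset.sum_congr rfl fun i _ => Finset.sum_congr rfl fun j _ => ?_
          have e1 : (q^a)^b = q^(a*b) := (pow_mul q a b).symm
          have e2 : (b:R)*((a:R)*L) = ((a*b : ℕ):R)*L := by push_cast; ring
          have e3 : (y + algebraMap ℚ R ((i:ℚ)/(a:ℚ))) + algebraMap ℚ R ((j:ℚ)/(b:ℚ))
              = y + algebraMap ℚ R ((i:ℚ)/(a:ℚ) + (j:ℚ)/(b:ℚ)) := by
            rw [map_add, add_assoc]
          rw [e1, e2, e3, ← pow_mul q a j, pow_add]
          ring
  rw [side w1 w2 hw1 hw2, side w2 w1 hw2 hw1, Finset.sum_comm]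
  rw [show (w2:R)^n * (w1:R)^n = (w1:R)^n * (w2:R)^n from by ring]
  congr 1
  refine Finset.sum_congr rfl fun i _ => Finset.sum_congr rfl fun j _ => ?_
  rw [Nat.add_comm (w2*j) (w1*i), Nat.mul_comm w1 w2,
    add_comm ((j:ℚ)/(w1:ℚ)) ((i:ℚ)/(w2:ℚ))]
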